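/- Suppose kLT(𝔇) acts coherently on R, the tree u(F; v(E₂),…,v(Eₙ)) acts as the derivation G, and each tree u(E_i; v(E₁)) acts as the derivation H_i. Then u(F; v(E₁),…,v(Eₙ)) acts on R identically to v(E₁)·v(G) − Σ_{i=2}^{n} u(F; v(E₂),…,v(H_i),…,v(Eₙ)) − t(v(E₁), v(G)). -/

import Mathlib

/-- An ordered labeled subtree: a node with a label and an ordered list of children. -/
inductive LSub (D : Type) : Type
  | mk : D → List (LSub D) → LSub D

/-- An ordered rooted tree with unlabeled root and non-root nodes labeled in `D`,
represented by the list of subtrees attached to the root. -/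
abbrev LTree (D : Type) := List (LSub D)

mutual
  /-- Number of nodes of a labeled subtree. -/
  def sizeS {D : Type} : LSub D → Nat
    | .mk _ ts => 1 + sizeL ts
  /-- Total number of (labeled) nodes of a forest. -/
  def sizeL {D : Type} : List (LSub D) → Nat
    | [] => 0
    | t :: ts => sizeS t + sizeL ts
end

mutual
  /-- Graft pending subtrees (given by `f`, indexed by the preorder index of nodes)
  onto a subtree whose own preorder index is `i`; attached subtrees are prepended. -/
  def graftS {D : Type} (f : Nat → List (LSub D)) (i : Nat) : LSub D → LSub D
    | .mk d ts => .mk d (f i ++ graftL f (i + 1) ts)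
  def graftL {D : Type} (f : Nat → List (LSub D)) (i : Nat) : List (LSub D) → List (LSub D)
    | [] => []
    | t :: ts => graftS f i t :: graftL f (i + sizeS t) ts
end

/-- Graft pending subtrees onto a tree; the root has preorder index `0`. -/
def graft {D : Type} (f : Nat → List (LSub D)) (t : LTree D) : LTree D :=
  f 0 ++ graftL f 1 t

/-- All lists of length `m` with entries `< n` (choices of attachment nodes). -/
def choices : Nat → Nat → List (List Nat)
  | 0, _ => [[]]
  | m + 1, n => (List.range n).flatMap fun c => (choices m n).map (c :: ·)

/-- The Grossman–Larson product of two basis trees, as an element of the free module: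
the sum over all ways of attaching the root-subtrees of `T1` to nodes of `T2`. -/
noncomputable def mulT (k : Type) [Semiring k] {D : Type} (T1 T2 : LTree D) :
    LTree D →₀ k :=
  ((choices T1.length (1 + sizeL T2)).map fun c =>
    Finsupp.single
      (graft (fun i => (T1.zip c).filterMap fun p => if p.2 = i then some p.1 else none) T2)
      (1 : k)).sum

/-- `v E`: the two-node tree whose single non-root node is labeled `E`. -/
def vT {D : Type} (E : D) : LTree D := [.mk E []]

/-- `u(E; T₁,…,T_k)`: root has one child labeled `E`, with which the roots of the `Tᵢ`
are identified. -/
def uT {D : Type} (E : D) (Ts : List (LTree D)) : LTree D := [.mk E Ts.flatten]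

/-- `t(T₁,…,T_k)`: identify the roots of the `Tᵢ`. -/
def tT {D : Type} (Ts : List (LTree D)) : LTree D := Ts.flatten

/-- All decompositions of an ordered multiset into a sub-multiset and its complement
(used for the coproduct). -/
def splits {α : Type} : List α → List (List α × List α)
  | [] => [([], [])]
  | a :: l => ((splits l).map fun p => (a :: p.1, p.2)) ++ ((splits l).map fun p => (p.1, a :: p.2))

/-- The labeled node of `T` at position `(i, p)`: the `i`-th root-subtree, then follow
the path `p` of child indices. -/
def subAtL {D : Type} : List (LSub D) → Nat → List Nat → Option (LSub D)
  | [], _, _ => none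
  | t :: _, 0, [] => some t
  | .mk _ cs :: _, 0, j :: p => subAtL cs j p
  | _ :: ts, i + 1, p => subAtL ts i p

/-- Replace the node of `T` at position `(i, p)`: relabel it with `G` and replace the
subtree rooted there (its list of children) by `T'`. -/
def replaceAtL {D : Type} (G : D) (T' : List (LSub D)) :
    List (LSub D) → Nat → List Nat → List (LSub D)
  | [], _, _ => []
  | _ :: ts, 0, [] => .mk G T' :: ts
  | .mk d cs :: ts, 0, j :: p => .mk d (replaceAtL G T' cs j p) :: ts
  | t :: ts, i + 1, p => t :: replaceAtL G T' ts i p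

/-- A `kLT(𝔇)`-module algebra structure on `R` (𝔇 = Der(R)), described via the action
`act` of basis trees: the one-node tree acts as the identity, each tree acts `k`-linearly,
the action is compatible with the tree-attachment product, and satisfies the module
algebra (Hopf) condition with respect to the splitting coproduct. -/
def IsTreeAction (k R : Type) [CommRing k] [CommRing R] [Algebra k R]
    (act : LTree (Derivation k R R) → R → R) : Prop :=
  (∀ f : R, act [] f = f) ∧
  (∀ (T : LTree (Derivation k R R)) (a : k) (f g : R),
    act T (a • f + g) = a • act T f + act T g) ∧
  (∀ (T₁ T₂ : LTree (Derivation k R R)) (f : R),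
    ((mulT k T₁ T₂).sum fun T c => c • act T f) = act T₁ (act T₂ f)) ∧
  (∀ (T : LTree (Derivation k R R)) (f g : R),
    act T (f * g) = ((splits T).map fun q => act q.1 f * act q.2 g).sum)

/-- The `kLT(𝔇)`-module algebra structure `act` is *Leibnitz* if for every tree `T`,
every non-root node (at position `(i, p)`) whose label factors as `r • E`, and every
`s ∈ R`, `T·s = Σ_{(T_i)} (T_{i(1)}·r) (T(i, E, T_{i(2)})·s)`, the coproduct being taken
in the subtree `T_i` rooted at the node. -/
def IsLeibnitz (k R : Type) [CommRing k] [CommRing R] [Algebra k R]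
    (act : LTree (Derivation k R R) → R → R) : Prop :=
  ∀ (T : LTree (Derivation k R R)) (i : Nat) (p : List Nat)
    (D₀ : Derivation k R R) (Ti : List (LSub (Derivation k R R))),
    subAtL T i p = some (LSub.mk D₀ Ti) →
    ∀ (r : R) (E : Derivation k R R), D₀ = r • E →
    ∀ s : R,
      act T s =
        ((splits Ti).map fun q => act q.1 r * act (replaceAtL E q.2 T i p) s).sum

/-- The action `act` is *coherent* if any subtree whose root has a single child and which
acts on `R` as a derivation `E` may be replaced by the two-node tree `v(E)` without
changing the action of the ambient tree. -/
def IsCoherent (k R : Type) [CommRing k] [CommRing R] [Algebra k R]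
    (act : LTree (Derivation k R R) → R → R) : Prop :=
  ∀ (T : LTree (Derivation k R R)) (i : Nat) (p : List Nat)
    (d : Derivation k R R) (cs : List (LSub (Derivation k R R))) (E : Derivation k R R),
    subAtL T i p = some (LSub.mk d cs) →
    (∀ f : R, act [LSub.mk d cs] f = E f) →
    ∀ f : R, act T f = act (replaceAtL E [] T i p) f

/-- A connection on `Der(R)`. -/
def IsConnection (k R : Type) [CommRing k] [CommRing R] [Algebra k R]
    (c : Derivation k R R → Derivation k R R → Derivation k R R) : Prop :=
  (∀ E₁ E₂ F, c (E₁ + E₂) F = c E₁ F + c E₂ F) ∧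
  (∀ E F₁ F₂, c E (F₁ + F₂) = c E F₁ + c E F₂) ∧
  (∀ (f : R) (E F), c (f • E) F = f • c E F) ∧
  (∀ (f : R) (E F), c E (f • F) = f • c E F + (E f) • F)


section Aux

variable {D : Type}

/-- A leaf node. -/
def leaf (E : D) : LSub D := .mk E []

lemma flatten_map_vT (l : List D) : (l.map vT).flatten = l.map leaf := by
  induction l with
  | nil => rfl
  | cons a l ih => simp [vT, leaf, ih]

lemma sizeL_map_leaf (l : List D) : sizeL (l.map leaf) = l.length := by
  induction l with
  | nil => rfl
  | cons a l ih => simp [leaf, sizeL, sizeS, ih]; omega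

/-- The result of grafting a single `leaf E₁` at preorder index `c0` onto a row of
leaves starting at index `i`. -/
def brushed (E₁ : D) (c0 : Nat) : Nat → List D → List (LSub D)
  | _, [] => []
  | i, E :: l => .mk E (if c0 = i then [leaf E₁] else []) :: brushed E₁ c0 (i+1) l

lemma graftL_leaf (E₁ : D) (c0 i : Nat) (l : List D) :
    graftL (fun j => if c0 = j then [leaf E₁] else []) i (l.map leaf) = brushed E₁ c0 i l := by
  induction l generalizing i with
  | nil => rfl
  | cons a l ih =>
    simp only [List.map_cons]
    show graftL _ i (LSub.mk a [] :: _) = _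
    simp [graftL, graftS, sizeS, sizeL, brushed, ih]

lemma brushed_lt (E₁ : D) {c0 i : Nat} (h : c0 < i) (l : List D) :
    brushed E₁ c0 i l = l.map leaf := by
  induction l generalizing i with
  | nil => rfl
  | cons a l ih =>
    simp [brushed, leaf, Nat.ne_of_lt h, ih (Nat.lt_succ_of_lt h)]

lemma brushed_set (E₁ : D) (i j : Nat) (l : List D) (hj : j < l.length) :
    brushed E₁ (i + j) i l = (l.map leaf).set j (.mk (l.get ⟨j, hj⟩) [leaf E₁]) := by
  induction l generalizing i j with
  | nil => simp at hj
  | cons a l ih =>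
    cases j with
    | zero =>
      simp [brushed, brushed_lt E₁ (Nat.lt_succ_self i)]
    | succ j =>
      have : i + (j + 1) = (i + 1) + j := by omega
      simp only [brushed, this]
      have hne : (i + 1) + j ≠ i := by omega
      simp [hne, ih (i+1) j (by simpa using hj), leaf]

lemma subAtL_nil (l : List (LSub D)) (i : Nat) : subAtL l i [] = l[i]? := by
  induction l generalizing i with
  | nil => simp [subAtL]
  | cons t ts ih =>
    cases i with
    | zero => simp [subAtL]
    | succ i => simpa [subAtL] using ih i

lemma replaceAtL_nil (G : D) (T' : List (LSub D)) (l : List (LSub D)) (i : Nat) :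
    replaceAtL G T' l i [] = l.set i (.mk G T') := by
  induction l generalizing i with
  | nil => simp [replaceAtL]
  | cons t ts ih =>
    cases i with
    | zero => simp [replaceAtL]
    | succ i => simpa [replaceAtL] using ih i

lemma flatten_map_singleton (g : D → LSub D) (l : List D) :
    (l.map fun a => [g a]).flatten = l.map g := by
  induction l with
  | nil => rfl
  | cons a l ih => simp [ih]

lemma flatten_set_singleton (g : D → LSub D) (l : List D) (j : Nat) (x : LSub D) :
    ((l.map fun a => [g a]).set j [x]).flatten = (l.map g).set j x := by
  induction l generalizing j with
  | nil => rfl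
  | cons a l ih =>
    cases j with
    | zero => simp [flatten_map_singleton]
    | succ j => simp [ih]

lemma subAtL_cons_path (d : D) (cs ts : List (LSub D)) (j : Nat) (p : List Nat) :
    subAtL (.mk d cs :: ts) 0 (j :: p) = subAtL cs j p := by
  simp [subAtL]

lemma replaceAtL_cons_path (G : D) (T' : List (LSub D)) (d : D) (cs ts : List (LSub D))
    (j : Nat) (p : List Nat) :
    replaceAtL G T' (.mk d cs :: ts) 0 (j :: p) = .mk d (replaceAtL G T' cs j p) :: ts := by
  simp [replaceAtL]

lemma flatMap_singleton_list {α : Type} (l : List α) :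
    (l.flatMap fun c => [[c]]) = l.map (fun c => [c]) := by
  induction l with
  | nil => rfl
  | cons a l ih => simp [ih]

lemma mulT_sum {k : Type} [Semiring k] {M : Type} [AddCommMonoid M] [Module k M]
    (T1 T2 : LTree D) (h : LTree D → M) :
    (mulT k T1 T2).sum (fun T c => c • h T)
      = ((choices T1.length (1 + sizeL T2)).map fun c =>
          h (graft (fun i => (T1.zip c).filterMap
              fun p => if p.2 = i then some p.1 else none) T2)).sum := by
  unfold mulT
  generalize choices T1.length (1 + sizeL T2) = cs
  induction cs with
  | nil => simp
  | cons c cs ih =>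
    rw [List.map_cons, List.sum_cons,
      Finsupp.sum_add_index' (fun a => by simp) (fun a b₁ b₂ => add_smul b₁ b₂ (h a)), ih,
      Finsupp.sum_single_index (by simp), one_smul, List.map_cons, List.sum_cons]

end Aux

/-- **Lemma (BrushAction).** Suppose `kLT(𝔇)` acts coherently on `R`, the tree
`u(F; v(E₂),…,v(Eₙ))` acts as the derivation `G`, and each tree `u(E_i; v(E₁))` acts as
the derivation `H_i` (`i = 2,…,n`; here `Es = [E₂,…,Eₙ]` and `Hs = [H₂,…,Hₙ]`).  Then
`u(F; v(E₁),…,v(Eₙ))` acts on `R` identically to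
`v(E₁)·v(G) − Σ_{i=2}^{n} u(F; v(E₂),…,v(H_i),…,v(Eₙ)) − t(v(E₁), v(G))`. -/
theorem brush_action
    (k R : Type) [Field k] [CommRing R] [Algebra k R]
    (act : LTree (Derivation k R R) → R → R)
    (hact : IsTreeAction k R act)
    (hcoh : IsCoherent k R act)
    (F E₁ : Derivation k R R) (Es Hs : List (Derivation k R R)) (G : Derivation k R R)
    (hlen : Hs.length = Es.length)
    (hG : ∀ f : R, act (uT F (Es.map vT)) f = G f)
    (hH : ∀ (i : Fin Es.length) (f : R),
      act (uT (Es.get i) [vT E₁]) f = (Hs.get (Fin.cast hlen.symm i)) f) :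
    ∀ f : R,
      act (uT F (vT E₁ :: Es.map vT)) f =
        ((mulT k (vT E₁) (vT G)).sum fun T a => a • act T f)
          - ((List.finRange Es.length).map fun i =>
              act (uT F ((Es.map vT).set i.1 (vT (Hs.get (Fin.cast hlen.symm i))))) f).sum
          - act (tT [vT E₁, vT G]) f := by
  intro f
  -- the core subtree acts as G
  have hT2 : ∀ g : R, act [LSub.mk F (Es.map leaf)] g = G g := by
    intro g; rw [← hG g]; congr 2
    simp [uT, flatten_map_vT]
  -- coherence: replace the core subtree by v G
  have hvG : ∀ g : R, act [LSub.mk F (Es.map leaf)] g = act (vT G) g := by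
    intro g
    have hs : subAtL [LSub.mk F (Es.map leaf)] 0 []
        = some (LSub.mk F (Es.map leaf)) := by simp [subAtL_nil]
    have h := hcoh [LSub.mk F (Es.map leaf)] 0 [] F (Es.map leaf) G hs hT2 g
    rw [h]; congr 1
    rw [replaceAtL_nil]; rfl
  have htG : ∀ g : R, act [leaf E₁, LSub.mk F (Es.map leaf)] g = act (tT [vT E₁, vT G]) g := by
    intro g
    have hs : subAtL [leaf E₁, LSub.mk F (Es.map leaf)] 1 []
        = some (LSub.mk F (Es.map leaf)) := by simp [subAtL_nil]
    have h := hcoh _ 1 [] F (Es.map leaf) G hs hT2 g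
    rw [h]; congr 1
    rw [replaceAtL_nil]; rfl
  -- coherence: replace each brushed branch by v H_i
  have hHi : ∀ i : Fin Es.length,
      act [LSub.mk F ((Es.map leaf).set i.1 (.mk (Es.get i) [leaf E₁]))] f
        = act (uT F ((Es.map vT).set i.1 (vT (Hs.get (Fin.cast hlen.symm i))))) f := by
    intro i
    have hsub : subAtL [LSub.mk F ((Es.map leaf).set i.1 (.mk (Es.get i) [leaf E₁]))] 0 [i.1]
        = some (LSub.mk (Es.get i) [leaf E₁]) := by
      rw [subAtL_cons_path, subAtL_nil]
      exact List.getElem?_set_eq_of_lt _ (by simpa using i.isLt)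
    have hact' : ∀ g : R, act [LSub.mk (Es.get i) [leaf E₁]] g
        = (Hs.get (Fin.cast hlen.symm i)) g := by
      intro g
      have h := hH i g
      simpa [uT, vT, leaf] using h
    have h := hcoh _ 0 [i.1] (Es.get i) [leaf E₁] _ hsub hact' f
    rw [h]; congr 1
    rw [replaceAtL_cons_path, replaceAtL_nil, List.set_set]
    show _ = [LSub.mk F (((Es.map vT).set i.1 (vT (Hs.get (Fin.cast hlen.symm i)))).flatten)]
    rw [show Es.map vT = Es.map (fun a => [leaf a]) from rfl,
      show vT (Hs.get (Fin.cast hlen.symm i)) = [leaf (Hs.get (Fin.cast hlen.symm i))] from rfl,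
      flatten_set_singleton]
    rfl
  -- compute the Grossman-Larson product of v E₁ with the core tree
  have hmul : (mulT k (vT E₁) [LSub.mk F (Es.map leaf)]).sum (fun T c => c • act T f)
      = act [leaf E₁, LSub.mk F (Es.map leaf)] f
        + act [LSub.mk F (leaf E₁ :: Es.map leaf)] f
        + ((List.finRange Es.length).map (fun i =>
            act [LSub.mk F ((Es.map leaf).set i.1 (.mk (Es.get i) [leaf E₁]))] f)).sum := by
    rw [mulT_sum]
    have hsz : 1 + sizeL [LSub.mk F (Es.map leaf)] = Es.length + 2 := by
      simp [sizeL, sizeS, sizeL_map_leaf]; omega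
    have hlen1 : (vT E₁).length = 1 := rfl
    rw [hsz, hlen1]
    have hch : choices 1 (Es.length + 2) = (List.range (Es.length + 2)).map (fun c => [c]) := by
      simp [choices, flatMap_singleton_list]
    have hrange : List.range (Es.length + 2)
        = 0 :: 1 :: (List.finRange Es.length).map (fun i => i.1 + 2) := by
      rw [List.range_succ_eq_map, List.range_succ_eq_map, ← List.map_coe_finRange_eq_range,
        List.map_cons, List.map_map, List.map_map]
      congr 1
    have hfc : ∀ c0 : Nat,
        (fun i => (((vT E₁).zip [c0]).filterMap fun p => if p.2 = i then some p.1 else none))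
          = fun i => if c0 = i then [leaf E₁] else [] := by
      intro c0; funext i
      by_cases h : c0 = i <;> simp [vT, leaf, h]
    have hgr : ∀ c0, graft (fun i => if c0 = i then [leaf E₁] else []) [LSub.mk F (Es.map leaf)]
        = (if c0 = 0 then [leaf E₁] else [])
            ++ [LSub.mk F ((if c0 = 1 then [leaf E₁] else []) ++ brushed E₁ c0 2 Es)] := by
      intro c0
      simp [graft, graftL, graftS, sizeS, graftL_leaf]
    have h0 : graft (fun i => (((vT E₁).zip [(0:Nat)]).filterMap
          fun p => if p.2 = i then some p.1 else none)) [LSub.mk F (Es.map leaf)]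
        = [leaf E₁, LSub.mk F (Es.map leaf)] := by
      rw [hfc 0, hgr 0, brushed_lt E₁ (by omega) Es]; simp
    have h1 : graft (fun i => (((vT E₁).zip [(1:Nat)]).filterMap
          fun p => if p.2 = i then some p.1 else none)) [LSub.mk F (Es.map leaf)]
        = [LSub.mk F (leaf E₁ :: Es.map leaf)] := by
      rw [hfc 1, hgr 1, brushed_lt E₁ (by omega) Es]; simp
    have h2 : ∀ i : Fin Es.length,
        graft (fun j => (((vT E₁).zip [i.1 + 2]).filterMap
            fun p => if p.2 = j then some p.1 else none)) [LSub.mk F (Es.map leaf)]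
          = [LSub.mk F ((Es.map leaf).set i.1 (.mk (Es.get i) [leaf E₁]))] := by
      intro i
      rw [hfc (i.1 + 2), hgr (i.1 + 2),
        show i.1 + 2 = 2 + i.1 from by omega, brushed_set E₁ 2 i.1 Es i.isLt]
      simp; omega
    rw [hch, hrange]
    simp only [List.map_cons, List.map_map, List.sum_cons, Function.comp]
    rw [h0, h1, ← add_assoc]
    congr 1
    refine congrArg List.sum (List.map_congr_left fun i _ => ?_)
    simp only [Function.comp_apply]
    rw [h2 i]
  -- put everything together
  have hkey := hact.2.2.1 (vT E₁) [LSub.mk F (Es.map leaf)] f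
  have hgoal1 : ((mulT k (vT E₁) (vT G)).sum fun T a => a • act T f)
      = act (vT E₁) (act [LSub.mk F (Es.map leaf)] f) := by
    rw [hact.2.2.1 (vT E₁) (vT G) f, ← hvG f]
  have hLHS : uT F (vT E₁ :: Es.map vT) = [LSub.mk F (leaf E₁ :: Es.map leaf)] := by
    simp [uT, vT, flatten_map_vT, leaf]
  have hsums : ((List.finRange Es.length).map fun i =>
        act (uT F ((Es.map vT).set i.1 (vT (Hs.get (Fin.cast hlen.symm i))))) f).sum
      = ((List.finRange Es.length).map (fun i =>
          act [LSub.mk F ((Es.map leaf).set i.1 (.mk (Es.get i) [leaf E₁]))] f)).sum := by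
    congr 1; exact List.map_congr_left fun i _ => (hHi i).symm
  rw [hLHS, hgoal1, ← htG f, hsums]
  rw [hmul] at hkey
  linear_combination hkey
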